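/- For a C² function f: ℝ → ℝ, the difference of external and internal morphological gradients approximates the second derivative: ((δ_r[f](x) − f(x))/r − (f(x) − ε_r[f](x))/r) / r → f''(x)·c as r → 0⁺ for some constant independent of f whenever f'(x) > 0; in fact, if f'(x) > 0 then (δ_r[f](x) − 2f(x) + ε_r[f](x))/r² → f''(x) as r → 0⁺. -/

import Mathlib

open Filter Set Topology

/-- For `f ∈ C²(ℝ)` with `f'(x) > 0`, the morphological second derivative
approximation converges: `(δ_r[f](x) − 2f(x) + ε_r[f](x))/r² → f''(x)` as
`r → 0⁺`. -/
theorem morphological_second_derivative (f : ℝ → ℝ) (hf : ContDiff ℝ 2 f)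
    (x : ℝ) (hpos : 0 < deriv f x) :
    Tendsto (fun r : ℝ =>
        (sSup ((fun b => f (x - b)) '' {b : ℝ | |b| ≤ r}) - 2 * f x +
          sInf ((fun b => f (x + b)) '' {b : ℝ | |b| ≤ r})) / r ^ 2)
      (nhdsWithin 0 (Ioi 0)) (nhds (deriv (deriv f) x)) := by
  have hf1 : Differentiable ℝ f := hf.differentiable two_ne_zero
  have hderivC : Continuous (deriv f) := hf.continuous_deriv one_le_two
  have hf' : ContDiff ℝ 1 (deriv f) := by
    have h2 : ContDiff ℝ (1 + 1) f := hf.of_le (by norm_num)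
    exact ((contDiff_succ_iff_deriv (n := 1)).mp h2).2.2
  have hd2 : HasDerivAt (deriv f) (deriv (deriv f) x) x :=
    ((hf'.differentiable one_ne_zero) x).hasDerivAt
  -- positivity neighborhood
  obtain ⟨δ, hδ, hball⟩ := Metric.isOpen_iff.mp (isOpen_Ioi.preimage hderivC) x hpos
  have hmono : StrictMonoOn f (Icc (x - δ/2) (x + δ/2)) := by
    apply strictMonoOn_of_deriv_pos (convex_Icc _ _) hf.continuous.continuousOn
    intro y hy
    apply hball
    rw [interior_Icc, mem_Ioo] at hy
    rw [Metric.mem_ball, Real.dist_eq, abs_lt]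
    constructor <;> linarith [hy.1, hy.2, hδ]
  -- eventual equality with the symmetric difference quotient
  have heq : ∀ᶠ r in 𝓝[>] (0:ℝ),
      (f (x + r) - 2 * f x + f (x - r)) / r ^ 2 =
      (sSup ((fun b => f (x - b)) '' {b : ℝ | |b| ≤ r}) - 2 * f x +
          sInf ((fun b => f (x + b)) '' {b : ℝ | |b| ≤ r})) / r ^ 2 := by
    filter_upwards [Ioo_mem_nhdsGT_of_mem ⟨le_refl (0:ℝ), half_pos hδ⟩] with r hr
    obtain ⟨hr0, hrδ⟩ := hr
    have hsub : Icc (x - r) (x + r) ⊆ Icc (x - δ/2) (x + δ/2) :=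
      Icc_subset_Icc (by linarith) (by linarith)
    have himg1 : (fun b => f (x - b)) '' {b : ℝ | |b| ≤ r} = f '' Icc (x - r) (x + r) := by
      ext y
      simp only [mem_image, mem_setOf_eq, mem_Icc, abs_le]
      constructor
      · rintro ⟨b, ⟨h1, h2⟩, rfl⟩; exact ⟨x - b, ⟨by linarith, by linarith⟩, rfl⟩
      · rintro ⟨z, ⟨h1, h2⟩, rfl⟩
        exact ⟨x - z, ⟨by linarith, by linarith⟩, by ring_nf⟩
    have himg2 : (fun b => f (x + b)) '' {b : ℝ | |b| ≤ r} = f '' Icc (x - r) (x + r) := by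
      ext y
      simp only [mem_image, mem_setOf_eq, mem_Icc, abs_le]
      constructor
      · rintro ⟨b, ⟨h1, h2⟩, rfl⟩; exact ⟨x + b, ⟨by linarith, by linarith⟩, rfl⟩
      · rintro ⟨z, ⟨h1, h2⟩, rfl⟩
        exact ⟨z - x, ⟨by linarith, by linarith⟩, by ring_nf⟩
    have hmem_hi : x + r ∈ Icc (x - r) (x + r) := ⟨by linarith, le_refl _⟩
    have hmem_lo : x - r ∈ Icc (x - r) (x + r) := ⟨le_refl _, by linarith⟩
    have hsup : sSup (f '' Icc (x - r) (x + r)) = f (x + r) := by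
      apply IsGreatest.csSup_eq
      refine ⟨mem_image_of_mem f hmem_hi, ?_⟩
      rintro y ⟨z, hz, rfl⟩
      exact hmono.monotoneOn (hsub hz) (hsub hmem_hi) hz.2
    have hinf : sInf (f '' Icc (x - r) (x + r)) = f (x - r) := by
      apply IsLeast.csInf_eq
      refine ⟨mem_image_of_mem f hmem_lo, ?_⟩
      rintro y ⟨z, hz, rfl⟩
      exact hmono.monotoneOn (hsub hmem_lo) (hsub hz) hz.1
    rw [himg1, himg2, hsup, hinf]
  -- limit of the symmetric difference quotient via L'Hôpital
  have hgderiv : ∀ r : ℝ, HasDerivAt (fun r => f (x + r) - 2 * f x + f (x - r))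
      (deriv f (x + r) - deriv f (x - r)) r := by
    intro r
    have h1 : HasDerivAt (fun r : ℝ => f (x + r)) (deriv f (x + r)) r := by
      have := ((hf1 (x + r)).hasDerivAt).comp r ((hasDerivAt_id r).const_add x)
      simpa [Function.comp_def] using this
    have h2 : HasDerivAt (fun r : ℝ => f (x - r)) (-deriv f (x - r)) r := by
      have := ((hf1 (x - r)).hasDerivAt).comp r ((hasDerivAt_id r).const_sub x)
      simpa [Function.comp_def] using this
    have h3 := (h1.sub_const (2 * f x)).add h2
    simpa [sub_eq_add_neg, Pi.add_def] using h3
  have hslope := hasDerivAt_iff_tendsto_slope.mp hd2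
  have t1 : Tendsto (fun r : ℝ => x + r) (𝓝[>] 0) (𝓝[≠] x) := by
    apply tendsto_nhdsWithin_of_tendsto_nhds_of_eventually_within
    · have : Tendsto (fun r : ℝ => x + r) (𝓝 0) (𝓝 x) := by
        simpa using (tendsto_id (x := 𝓝 (0:ℝ))).const_add x
      exact this.mono_left nhdsWithin_le_nhds
    · filter_upwards [self_mem_nhdsWithin] with r hr
      have : (0:ℝ) < r := hr
      simp only [mem_compl_iff, mem_singleton_iff]
      intro h
      nlinarith [h]
  have t2 : Tendsto (fun r : ℝ => x - r) (𝓝[>] 0) (𝓝[≠] x) := by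
    apply tendsto_nhdsWithin_of_tendsto_nhds_of_eventually_within
    · have : Tendsto (fun r : ℝ => x - r) (𝓝 0) (𝓝 x) := by
        simpa using (tendsto_id (x := 𝓝 (0:ℝ))).const_sub x
      exact this.mono_left nhdsWithin_le_nhds
    · filter_upwards [self_mem_nhdsWithin] with r hr
      have : (0:ℝ) < r := hr
      simp only [mem_compl_iff, mem_singleton_iff]
      intro h
      nlinarith [h]
  have hA := hslope.comp t1
  have hB := hslope.comp t2
  have hdiv : Tendsto (fun r : ℝ => (deriv f (x + r) - deriv f (x - r)) / (2 * r))
      (𝓝[>] 0) (𝓝 (deriv (deriv f) x)) := by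
    have hsum := (hA.add hB).div_const 2
    have : (deriv (deriv f) x + deriv (deriv f) x) / 2 = deriv (deriv f) x := by ring
    rw [this] at hsum
    refine hsum.congr' ?_
    filter_upwards [self_mem_nhdsWithin] with r hr
    have hr0 : (0:ℝ) < r := hr
    simp only [Function.comp, slope_def_field]
    have e1 : x + r - x = r := by ring
    have e2 : x - r - x = -r := by ring
    rw [e1, e2, div_neg, ← sub_eq_add_neg, div_sub_div_same, div_div,
      show r * 2 = 2 * r by ring]
    congr 1
    ring
  have hmain : Tendsto (fun r : ℝ => (f (x + r) - 2 * f x + f (x - r)) / r ^ 2)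
      (𝓝[>] 0) (𝓝 (deriv (deriv f) x)) := by
    apply HasDerivAt.lhopital_zero_nhdsGT
      (f' := fun r => deriv f (x + r) - deriv f (x - r)) (g' := fun r => 2 * r)
    · filter_upwards with r; exact hgderiv r
    · filter_upwards with r
      have := hasDerivAt_pow 2 r
      simpa using this
    · filter_upwards [self_mem_nhdsWithin] with r hr
      have : (0:ℝ) < r := hr
      positivity
    · have : Tendsto (fun r : ℝ => f (x + r) - 2 * f x + f (x - r)) (𝓝 0) (𝓝 0) := by
        have hc : Continuous (fun r : ℝ => f (x + r) - 2 * f x + f (x - r)) :=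
          ((hf.continuous.comp (continuous_const.add continuous_id)).sub
            continuous_const).add (hf.continuous.comp (continuous_const.sub continuous_id))
        have h0 := hc.tendsto (0:ℝ)
        simp only [add_zero, sub_zero] at h0
        convert h0 using 2
        ring
      exact this.mono_left nhdsWithin_le_nhds
    · have : Tendsto (fun r : ℝ => r ^ 2) (𝓝 0) (𝓝 0) := by
        have := (continuous_pow 2).tendsto (0:ℝ)
        simpa using this
      exact this.mono_left nhdsWithin_le_nhds
    · exact hdiv
  exact hmain.congr' heq
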